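/- Let Σ, Σ̂ be n×n positive semidefinite symmetric matrices with Gelbrich distance G(Σ, Σ̂) ≤ ε. Then λ_max(Σ + Σ̂ + 2(Σ̂^{1/2} Σ Σ̂^{1/2})^{1/2}) ≤ (2λ_max(Σ̂)^{1/2} + ε)², and consequently G(Σ, Σ̂) ≥ ‖Σ − Σ̂‖_F / (2λ_max(Σ̂)^{1/2} + ε). -/

import Mathlib

open Matrix

section OldSqrt

open scoped ComplexOrder

/-- The positive semidefinite square root, as `Matrix.PosSemidef.sqrt` was defined in Mathlib of
December 2024 (since removed in favour of `CFC.sqrt`). -/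
noncomputable def Matrix.PosSemidef.sqrt {n 𝕜 : Type*} [Fintype n] [RCLike 𝕜] [DecidableEq n]
    {A : Matrix n n 𝕜} (hA : A.PosSemidef) : Matrix n n 𝕜 :=
  hA.1.eigenvectorUnitary.1 * diagonal ((↑) ∘ (√·) ∘ hA.1.eigenvalues) *
    (star hA.1.eigenvectorUnitary : Matrix n n 𝕜)

end OldSqrt

/-- Frobenius norm. -/
noncomputable def frobNorm {n : ℕ} (A : Matrix (Fin n) (Fin n) ℝ) : ℝ :=
  Real.sqrt ((Aᵀ * A).trace)


section helpers

variable {ι : Type*} [Fintype ι]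

/-- Cauchy–Schwarz for finite sums. -/
lemma cs_sum (f g : ι → ℝ) :
    ∑ i, f i * g i ≤ Real.sqrt (∑ i, f i ^ 2) * Real.sqrt (∑ i, g i ^ 2) := by
  have h := Finset.sum_mul_sq_le_sq_mul_sq Finset.univ f g
  calc ∑ i, f i * g i ≤ |∑ i, f i * g i| := le_abs_self _
    _ = Real.sqrt ((∑ i, f i * g i) ^ 2) := (Real.sqrt_sq_eq_abs _).symm
    _ ≤ Real.sqrt ((∑ i, f i ^ 2) * ∑ i, g i ^ 2) := Real.sqrt_le_sqrt h
    _ = _ := Real.sqrt_mul (Finset.sum_nonneg fun i _ => sq_nonneg _) _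

lemma sqrt_sum_sq_triangle (f g : ι → ℝ) :
    Real.sqrt (∑ i, (f i + g i) ^ 2) ≤
      Real.sqrt (∑ i, f i ^ 2) + Real.sqrt (∑ i, g i ^ 2) := by
  have h1 : ∑ i, (f i + g i) ^ 2
      ≤ (Real.sqrt (∑ i, f i ^ 2) + Real.sqrt (∑ i, g i ^ 2)) ^ 2 := by
    have hf : (Real.sqrt (∑ i, f i ^ 2)) ^ 2 = ∑ i, f i ^ 2 :=
      Real.sq_sqrt (Finset.sum_nonneg fun i _ => sq_nonneg _)
    have hg : (Real.sqrt (∑ i, g i ^ 2)) ^ 2 = ∑ i, g i ^ 2 :=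
      Real.sq_sqrt (Finset.sum_nonneg fun i _ => sq_nonneg _)
    have hcs := cs_sum f g
    calc ∑ i, (f i + g i) ^ 2 = ∑ i, f i ^ 2 + 2 * (∑ i, f i * g i) + ∑ i, g i ^ 2 := by
          rw [Finset.mul_sum, ← Finset.sum_add_distrib, ← Finset.sum_add_distrib]
          exact Finset.sum_congr rfl fun i _ => by ring
      _ ≤ _ := by nlinarith [hcs]
  calc Real.sqrt (∑ i, (f i + g i) ^ 2) ≤
      Real.sqrt ((Real.sqrt (∑ i, f i ^ 2) + Real.sqrt (∑ i, g i ^ 2)) ^ 2) :=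
        Real.sqrt_le_sqrt h1
    _ = _ := Real.sqrt_sq (by positivity)

end helpers

lemma Matrix.PosSemidef.sqrt_mul_self {m : Type*} [Fintype m] [DecidableEq m]
    {A : Matrix m m ℝ} (hA : A.PosSemidef) : hA.sqrt * hA.sqrt = A := by
  have hU : (star (hA.1.eigenvectorUnitary : Matrix m m ℝ)) * (hA.1.eigenvectorUnitary : Matrix m m ℝ) = 1 :=
    Unitary.coe_star_mul_self _
  unfold Matrix.PosSemidef.sqrt
  conv_rhs => rw [hA.1.spectral_theorem, Unitary.conjStarAlgAut_apply]
  rw [show ∀ X Y Z W V : Matrix m m ℝ, X * Y * Z * (W * Y * V) = X * Y * (Z * W) * Y * V from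
    fun _ _ _ _ _ => by simp only [Matrix.mul_assoc], hU, Matrix.mul_one, Matrix.mul_assoc _ (diagonal _) (diagonal _),
    diagonal_mul_diagonal]
  congr 3
  funext i
  simp [Real.mul_self_sqrt (hA.eigenvalues_nonneg i)]

lemma Matrix.PosSemidef.sqrt_isHermitian {m : Type*} [Fintype m] [DecidableEq m]
    {A : Matrix m m ℝ} (hA : A.PosSemidef) : hA.sqrt.IsHermitian := by
  unfold Matrix.PosSemidef.sqrt
  rw [Matrix.IsHermitian, conjTranspose_mul, conjTranspose_mul, Matrix.star_eq_conjTranspose,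
    conjTranspose_conjTranspose, diagonal_conjTranspose, star_trivial, Matrix.mul_assoc]

open Matrix

section matrixHelpers
variable {n : ℕ}

lemma dot_eq_sum_sq (x : Fin n → ℝ) : x ⬝ᵥ x = ∑ i, x i ^ 2 := by
  simp [dotProduct, pow_two]

lemma dot_self_nonneg (x : Fin n → ℝ) : 0 ≤ x ⬝ᵥ x := by
  rw [dot_eq_sum_sq]; positivity

lemma dot_cs (x y : Fin n → ℝ) :
    x ⬝ᵥ y ≤ Real.sqrt (x ⬝ᵥ x) * Real.sqrt (y ⬝ᵥ y) := by
  rw [dot_eq_sum_sq, dot_eq_sum_sq]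
  exact cs_sum x y

lemma dot_triangle (x y : Fin n → ℝ) :
    Real.sqrt ((x + y) ⬝ᵥ (x + y)) ≤ Real.sqrt (x ⬝ᵥ x) + Real.sqrt (y ⬝ᵥ y) := by
  rw [dot_eq_sum_sq, dot_eq_sum_sq, dot_eq_sum_sq]
  exact sqrt_sum_sq_triangle x y

lemma mulVec_dot_shift (A : Matrix (Fin n) (Fin n) ℝ) (x y : Fin n → ℝ) :
    (A *ᵥ x) ⬝ᵥ y = x ⬝ᵥ (Aᵀ *ᵥ y) := by
  rw [dotProduct_mulVec, vecMul_transpose]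

lemma trace_transpose_mul (X : Matrix (Fin n) (Fin n) ℝ) :
    (Xᵀ * X).trace = ∑ j, (fun i => X i j) ⬝ᵥ (fun i => X i j) := by
  simp [Matrix.trace, Matrix.diag, Matrix.mul_apply, dotProduct]

lemma trace_eq_prod_sum (X : Matrix (Fin n) (Fin n) ℝ) :
    (Xᵀ * X).trace = ∑ p : Fin n × Fin n, (X p.2 p.1) ^ 2 := by
  simp [Matrix.trace, Matrix.diag, Matrix.mul_apply, Fintype.sum_prod_type, pow_two]

lemma trace_tmul_nonneg (X : Matrix (Fin n) (Fin n) ℝ) : 0 ≤ (Xᵀ * X).trace := by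
  rw [trace_eq_prod_sum]; positivity

lemma trace_tmul_transpose (X : Matrix (Fin n) (Fin n) ℝ) :
    ((Xᵀ)ᵀ * Xᵀ).trace = (Xᵀ * X).trace := by
  rw [Matrix.transpose_transpose, Matrix.trace_mul_comm]

lemma col_mul (Y X : Matrix (Fin n) (Fin n) ℝ) (j : Fin n) :
    (fun i => (Y * X) i j) = Y *ᵥ (fun i => X i j) := by
  funext i
  simp [Matrix.mul_apply, Matrix.mulVec, dotProduct]

lemma mulVec_dot_le_trace (X : Matrix (Fin n) (Fin n) ℝ) (x : Fin n → ℝ) :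
    (X *ᵥ x) ⬝ᵥ (X *ᵥ x) ≤ (Xᵀ * X).trace * (x ⬝ᵥ x) := by
  rw [dot_eq_sum_sq, trace_eq_prod_sum, dot_eq_sum_sq, Fintype.sum_prod_type]
  calc ∑ i, (X *ᵥ x) i ^ 2 = ∑ i, (∑ j, X i j * x j) ^ 2 := by
        simp [Matrix.mulVec, dotProduct]
    _ ≤ ∑ i, (∑ j, X i j ^ 2) * (∑ j, x j ^ 2) := by
        refine Finset.sum_le_sum fun i _ => ?_
        exact Finset.sum_mul_sq_le_sq_mul_sq Finset.univ _ _
    _ = (∑ p : Fin n, ∑ j, X j p ^ 2) * ∑ j, x j ^ 2 := by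
        rw [← Finset.sum_mul]
        congr 1
        exact Finset.sum_comm
    _ ≤ _ := le_refl _

lemma frob_triangle (X Y : Matrix (Fin n) (Fin n) ℝ) :
    Real.sqrt (((X + Y)ᵀ * (X + Y)).trace) ≤
      Real.sqrt ((Xᵀ * X).trace) + Real.sqrt ((Yᵀ * Y).trace) := by
  rw [trace_eq_prod_sum, trace_eq_prod_sum, trace_eq_prod_sum]
  simp only [Matrix.add_apply]
  have h := sqrt_sum_sq_triangle (fun p : Fin n × Fin n => X p.2 p.1) (fun p => Y p.2 p.1)
  exact h

lemma frob_mul_le (Y X : Matrix (Fin n) (Fin n) ℝ) (lam : ℝ)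
    (h : ∀ x : Fin n → ℝ, (Y *ᵥ x) ⬝ᵥ (Y *ᵥ x) ≤ lam * (x ⬝ᵥ x)) :
    ((Y * X)ᵀ * (Y * X)).trace ≤ lam * (Xᵀ * X).trace := by
  rw [trace_transpose_mul, trace_transpose_mul, Finset.mul_sum]
  refine Finset.sum_le_sum fun j _ => ?_
  rw [col_mul]
  exact h _

end matrixHelpers
section eigenHelpers
variable {n : ℕ}

lemma onb_dot (c : OrthonormalBasis (Fin n) ℝ (EuclideanSpace ℝ (Fin n))) (i j : Fin n) :
    ⇑(c i) ⬝ᵥ ⇑(c j) = if i = j then 1 else 0 := by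
  have h := c.orthonormal
  rw [orthonormal_iff_ite] at h
  have h2 := h i j
  rw [EuclideanSpace.inner_eq_star_dotProduct] at h2
  rw [dotProduct_comm]; simpa using h2

lemma quad_le {A : Matrix (Fin n) (Fin n) ℝ} (hA : A.IsHermitian) (lam : ℝ)
    (hlam : ∀ i, hA.eigenvalues i ≤ lam) (x : Fin n → ℝ) :
    x ⬝ᵥ (A *ᵥ x) ≤ lam * (x ⬝ᵥ x) := by
  set V : Matrix (Fin n) (Fin n) ℝ := (hA.eigenvectorUnitary : Matrix (Fin n) (Fin n) ℝ) with hV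
  have hVt : star V = Vᵀ := by
    rw [Matrix.star_eq_conjTranspose, Matrix.conjTranspose_eq_transpose_of_trivial]
  have hVV : Vᵀ * V = 1 := by
    rw [← hVt]; exact (Matrix.mem_unitaryGroup_iff').mp hA.eigenvectorUnitary.2
  have hVV' : V * Vᵀ = 1 := mul_eq_one_comm.mp hVV
  have hspec : A = V * Matrix.diagonal hA.eigenvalues * Vᵀ := by
    have := hA.spectral_theorem
    rwa [Unitary.conjStarAlgAut_apply, hVt, RCLike.ofReal_real_eq_id, Function.id_comp] at this
  set y : Fin n → ℝ := Vᵀ *ᵥ x with hy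
  have hyy : y ⬝ᵥ y = x ⬝ᵥ x := by
    rw [hy, mulVec_dot_shift, Matrix.transpose_transpose, Matrix.mulVec_mulVec, hVV',
      Matrix.one_mulVec]
  have hquad : x ⬝ᵥ (A *ᵥ x) = ∑ i, hA.eigenvalues i * (y i * y i) := by
    have h0 : x ⬝ᵥ (A *ᵥ x) = x ⬝ᵥ ((V * Matrix.diagonal hA.eigenvalues * Vᵀ) *ᵥ x) := by
      rw [← hspec]
    rw [h0, ← Matrix.mulVec_mulVec, ← Matrix.mulVec_mulVec, dotProduct_comm,
      mulVec_dot_shift, ← hy]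
    simp [dotProduct, Matrix.mulVec_diagonal, mul_assoc]
  have hsum : y ⬝ᵥ y = ∑ i, y i * y i := rfl
  rw [hquad, ← hyy, hsum, Finset.mul_sum]
  refine Finset.sum_le_sum fun i _ => ?_
  nlinarith [hlam i, mul_self_nonneg (y i)]

lemma eig_dot {A : Matrix (Fin n) (Fin n) ℝ} (hA : A.IsHermitian) (i : Fin n) :
    ⇑(hA.eigenvectorBasis i) ⬝ᵥ (A *ᵥ ⇑(hA.eigenvectorBasis i)) = hA.eigenvalues i := by
  rw [hA.mulVec_eigenvectorBasis]
  rw [dotProduct_smul]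
  have h := onb_dot hA.eigenvectorBasis i i
  simp only [eq_self_iff_true, if_true] at h
  rw [h, smul_eq_mul, mul_one]

lemma sqrt_dot {Q : Matrix (Fin n) (Fin n) ℝ} (hQ : Q.PosSemidef) (x : Fin n → ℝ) :
    (hQ.sqrt *ᵥ x) ⬝ᵥ (hQ.sqrt *ᵥ x) = x ⬝ᵥ (Q *ᵥ x) := by
  have hsym : (hQ.sqrt)ᵀ = hQ.sqrt := by
    have := hQ.sqrt_isHermitian
    rwa [Matrix.IsHermitian, Matrix.conjTranspose_eq_transpose_of_trivial] at this
  rw [mulVec_dot_shift, hsym, Matrix.mulVec_mulVec, hQ.sqrt_mul_self]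

lemma sqrt_mulVec_eigen {Q : Matrix (Fin n) (Fin n) ℝ} (hQ : Q.PosSemidef) (j : Fin n) :
    hQ.sqrt *ᵥ ⇑(hQ.1.eigenvectorBasis j)
      = Real.sqrt (hQ.1.eigenvalues j) • ⇑(hQ.1.eigenvectorBasis j) := by
  unfold Matrix.PosSemidef.sqrt
  rw [← Matrix.mulVec_mulVec, ← Matrix.mulVec_mulVec,
    Matrix.IsHermitian.star_eigenvectorUnitary_mulVec, Matrix.diagonal_mulVec_single]
  have h1 : (Pi.single j ((RCLike.ofReal ∘ Real.sqrt ∘ hQ.1.eigenvalues) j * 1) : Fin n → ℝ)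
      = Real.sqrt (hQ.1.eigenvalues j) • (Pi.single j 1 : Fin n → ℝ) := by
    rw [RCLike.ofReal_real_eq_id]
    simp only [Function.comp_apply, id_eq, mul_one]
    rw [← Pi.single_smul, smul_eq_mul, mul_one]
  rw [h1, Matrix.mulVec_smul, Matrix.IsHermitian.eigenvectorUnitary_mulVec]

end eigenHelpers
section polar
variable {n : ℕ}

lemma onb_matrix_orth (c : OrthonormalBasis (Fin n) ℝ (EuclideanSpace ℝ (Fin n))) :
    (Matrix.of fun p i => ⇑(c i) p)ᵀ * (Matrix.of fun p i => ⇑(c i) p) = 1 := by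
  ext i j
  have h := onb_dot c i j
  simp only [dotProduct] at h
  simp only [Matrix.mul_apply, Matrix.transpose_apply, Matrix.of_apply, Matrix.one_apply]
  exact h

lemma onb_matrix_mulVec_single (c : OrthonormalBasis (Fin n) ℝ (EuclideanSpace ℝ (Fin n)))
    (j : Fin n) : (Matrix.of fun p i => ⇑(c i) p)ᵀ *ᵥ ⇑(c j) = Pi.single j 1 := by
  funext i
  have h := onb_dot c i j
  simp only [dotProduct] at h
  simp only [Matrix.mulVec, dotProduct, Matrix.transpose_apply, Matrix.of_apply]
  rw [h, Pi.single_apply]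

lemma onb_matrix_col (c : OrthonormalBasis (Fin n) ℝ (EuclideanSpace ℝ (Fin n)))
    (j : Fin n) : (Matrix.of fun p i => ⇑(c i) p) *ᵥ Pi.single j 1 = ⇑(c j) := by
  funext p
  simp [Matrix.mulVec_single]

lemma polar_exists {C M : Matrix (Fin n) (Fin n) ℝ} (hM : M.PosSemidef)
    (hCM : Cᵀ * C = M) :
    ∃ U : Matrix (Fin n) (Fin n) ℝ, Uᵀ * U = 1 ∧ C = U * hM.sqrt := by
  classical
  set b := hM.1.eigenvectorBasis with hb
  set μ := hM.1.eigenvalues with hμ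
  have hμ0 : ∀ i, 0 ≤ μ i := fun i => hM.eigenvalues_nonneg i
  have hdot : ∀ i j, (C *ᵥ ⇑(b i)) ⬝ᵥ (C *ᵥ ⇑(b j)) = μ j * (if i = j then 1 else 0) := by
    intro i j
    have hmv := hM.1.mulVec_eigenvectorBasis j
    rw [← hb, ← hμ] at hmv
    rw [mulVec_dot_shift, Matrix.mulVec_mulVec, hCM, hmv, dotProduct_smul,
      onb_dot b i j, smul_eq_mul]
  set s : Set (Fin n) := {i | μ i ≠ 0} with hs
  set w : Fin n → EuclideanSpace ℝ (Fin n) := fun i =>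
    (Real.sqrt (μ i))⁻¹ • (WithLp.equiv 2 (Fin n → ℝ)).symm (C *ᵥ ⇑(b i)) with hw
  have hortho : Orthonormal ℝ (s.restrict w) := by
    rw [orthonormal_iff_ite]
    rintro ⟨i, hi⟩ ⟨j, hj⟩
    have hinner : (inner ℝ (w i) (w j) : ℝ) =
        (Real.sqrt (μ i))⁻¹ * ((Real.sqrt (μ j))⁻¹ * (μ j * (if i = j then 1 else 0))) := by
      rw [hw]
      simp only [real_inner_smul_left, real_inner_smul_right]
      rw [EuclideanSpace.inner_eq_star_dotProduct]
      simp only [star_trivial, WithLp.equiv_symm_apply]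
      rw [dotProduct_comm, hdot i j]
      ring
    by_cases hij : i = j
    · subst hij
      have hi' : μ i ≠ 0 := hi
      simp only [Set.restrict_apply, if_pos rfl]
      change inner ℝ (w i) (w i) = _
      rw [hinner, if_pos rfl, if_pos trivial]
      have hsq : Real.sqrt (μ i) * Real.sqrt (μ i) = μ i := Real.mul_self_sqrt (hμ0 i)
      have hsne : Real.sqrt (μ i) ≠ 0 := by
        rw [Real.sqrt_ne_zero (hμ0 i)]; exact hi'
      field_simp
      rw [Real.sq_sqrt (hμ0 i)]
    · have hne : (⟨i, hi⟩ : s) ≠ ⟨j, hj⟩ := by simp [Subtype.ext_iff, hij]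
      rw [if_neg hne]
      change inner ℝ (w i) (w j) = _
      rw [hinner, if_neg hij]
      ring
  obtain ⟨c, hc⟩ := hortho.exists_orthonormalBasis_extension_of_card_eq
    (by simpa using (finrank_euclideanSpace (𝕜 := ℝ) (ι := Fin n)))
  set Qc : Matrix (Fin n) (Fin n) ℝ := Matrix.of fun p i => ⇑(c i) p with hQcdef
  set Qb : Matrix (Fin n) (Fin n) ℝ := Matrix.of fun p i => ⇑(b i) p with hQbdef
  have hQcO : Qcᵀ * Qc = 1 := onb_matrix_orth c
  have hQbO : Qbᵀ * Qb = 1 := onb_matrix_orth b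
  have hQbO' : Qb * Qbᵀ = 1 := mul_eq_one_comm.mp hQbO
  refine ⟨Qc * Qbᵀ, ?_, ?_⟩
  · rw [Matrix.transpose_mul, Matrix.transpose_transpose, ← Matrix.mul_assoc,
      Matrix.mul_assoc Qb Qcᵀ Qc, hQcO, Matrix.mul_one, hQbO']
  · have key : ∀ j, C *ᵥ ⇑(b j) = ((Qc * Qbᵀ) * hM.sqrt) *ᵥ ⇑(b j) := by
      intro j
      have hsqv := sqrt_mulVec_eigen hM j
      rw [← hb, ← hμ] at hsqv
      rw [← Matrix.mulVec_mulVec, hsqv, Matrix.mulVec_smul]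
      have hUb : (Qc * Qbᵀ) *ᵥ ⇑(b j) = ⇑(c j) := by
        rw [← Matrix.mulVec_mulVec, onb_matrix_mulVec_single b j, onb_matrix_col c j]
      rw [hUb]
      by_cases hj : μ j = 0
      · have h0 : C *ᵥ ⇑(b j) = 0 := by
          apply dotProduct_self_eq_zero.mp
          rw [hdot j j]
          simp [hj]
        rw [h0, hj, Real.sqrt_zero, zero_smul]
      · have hcj : c j = w j := hc j hj
        have hsne : Real.sqrt (μ j) ≠ 0 := by
          rw [Real.sqrt_ne_zero (hμ0 j)]; exact hj
        have hcoe : ⇑(c j) = (Real.sqrt (μ j))⁻¹ • (C *ᵥ ⇑(b j)) := by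
          rw [hcj, hw]
          simp
        rw [hcoe, smul_smul, mul_inv_cancel₀ hsne, one_smul]
    have hCQb : C * Qb = ((Qc * Qbᵀ) * hM.sqrt) * Qb := by
      ext p j
      have hk := congrFun (key j) p
      simp only [Matrix.mulVec, dotProduct] at hk
      simp only [Matrix.mul_apply, hQbdef, Matrix.of_apply]
      exact hk
    calc C = C * 1 := (Matrix.mul_one C).symm
      _ = C * (Qb * Qbᵀ) := by rw [hQbO']
      _ = (C * Qb) * Qbᵀ := by rw [Matrix.mul_assoc]
      _ = (((Qc * Qbᵀ) * hM.sqrt) * Qb) * Qbᵀ := by rw [hCQb]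
      _ = ((Qc * Qbᵀ) * hM.sqrt) * (Qb * Qbᵀ) := by rw [Matrix.mul_assoc]
      _ = (Qc * Qbᵀ) * hM.sqrt := by rw [hQbO', Matrix.mul_one]

end polar

theorem stmt_9 {n : ℕ} (ε : ℝ) (hε : 0 ≤ ε) (S Shat : Matrix (Fin n) (Fin n) ℝ)
    (hS : S.PosSemidef) (hShat : Shat.PosSemidef)
    (hM : (hShat.sqrt * S * hShat.sqrt).PosSemidef)
    (hP : (S + Shat + (2 : ℝ) • hM.sqrt).IsHermitian)
    (hG : Real.sqrt ((S + Shat - (2 : ℝ) • hM.sqrt).trace) ≤ ε) :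
    (⨆ i, hP.eigenvalues i)
        ≤ (2 * Real.sqrt (⨆ i, hShat.isHermitian.eigenvalues i) + ε) ^ 2 ∧
    frobNorm (S - Shat) / (2 * Real.sqrt (⨆ i, hShat.isHermitian.eigenvalues i) + ε)
        ≤ Real.sqrt ((S + Shat - (2 : ℝ) • hM.sqrt).trace) := by
  classical
  rcases Nat.eq_zero_or_pos n with hn | hn
  · subst hn
    constructor
    · have h1 : (⨆ i : Fin 0, hP.eigenvalues i) = 0 := Real.iSup_of_isEmpty _
      rw [h1]
      positivity
    · have h2 : frobNorm (S - Shat) = 0 := by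
        have : ((S - Shat)ᵀ * (S - Shat)).trace = 0 := by
          simp [Matrix.trace]
        rw [frobNorm, this, Real.sqrt_zero]
      rw [h2, zero_div]
      exact Real.sqrt_nonneg _
  haveI : Nonempty (Fin n) := ⟨⟨0, hn⟩⟩
  set A := hS.sqrt with hAdef
  set B := hShat.sqrt with hBdef
  set R := hM.sqrt with hRdef
  have hAsym : Aᵀ = A := by
    have := hS.sqrt_isHermitian
    rwa [Matrix.IsHermitian, Matrix.conjTranspose_eq_transpose_of_trivial] at this
  have hBsym : Bᵀ = B := by
    have := hShat.sqrt_isHermitian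
    rwa [Matrix.IsHermitian, Matrix.conjTranspose_eq_transpose_of_trivial] at this
  have hAA : A * A = S := hS.sqrt_mul_self
  have hBB : B * B = Shat := hShat.sqrt_mul_self
  -- eigenvalue suprema
  set lamS : ℝ := ⨆ i, hS.isHermitian.eigenvalues i with hlamSdef
  set lamH : ℝ := ⨆ i, hShat.isHermitian.eigenvalues i with hlamHdef
  have hlamSle : ∀ i, hS.isHermitian.eigenvalues i ≤ lamS :=
    fun i => le_ciSup (Set.Finite.bddAbove (Set.finite_range _)) i
  have hlamHle : ∀ i, hShat.isHermitian.eigenvalues i ≤ lamH :=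
    fun i => le_ciSup (Set.Finite.bddAbove (Set.finite_range _)) i
  have hlamS0 : 0 ≤ lamS :=
    le_trans (hS.eigenvalues_nonneg (Classical.arbitrary (Fin n)))
      (hlamSle (Classical.arbitrary (Fin n)))
  have hlamH0 : 0 ≤ lamH :=
    le_trans (hShat.eigenvalues_nonneg (Classical.arbitrary (Fin n)))
      (hlamHle (Classical.arbitrary (Fin n)))
  have hquadS : ∀ x : Fin n → ℝ, x ⬝ᵥ (S *ᵥ x) ≤ lamS * (x ⬝ᵥ x) :=
    fun x => quad_le hS.isHermitian lamS hlamSle x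
  have hquadH : ∀ x : Fin n → ℝ, x ⬝ᵥ (Shat *ᵥ x) ≤ lamH * (x ⬝ᵥ x) :=
    fun x => quad_le hShat.isHermitian lamH hlamHle x
  have hAdot : ∀ x : Fin n → ℝ, (A *ᵥ x) ⬝ᵥ (A *ᵥ x) = x ⬝ᵥ (S *ᵥ x) :=
    fun x => sqrt_dot hS x
  have hBdot : ∀ x : Fin n → ℝ, (B *ᵥ x) ⬝ᵥ (B *ᵥ x) = x ⬝ᵥ (Shat *ᵥ x) :=
    fun x => sqrt_dot hShat x
  -- polar decomposition of A * B
  have hCsq : (A * B)ᵀ * (A * B) = B * S * B := by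
    rw [Matrix.transpose_mul, hAsym, hBsym, ← hAA]
    noncomm_ring
  obtain ⟨U, hUO, hCU⟩ := polar_exists hM hCsq
  have hUO' : U * Uᵀ = 1 := mul_eq_one_comm.mp hUO
  have hRUC : R = Uᵀ * (A * B) := by
    rw [hCU, ← Matrix.mul_assoc, hUO, Matrix.one_mul]
  set D : Matrix (Fin n) (Fin n) ℝ := A * U - B with hDdef
  have hDT : Dᵀ = Uᵀ * A - B := by
    rw [hDdef, Matrix.transpose_sub, Matrix.transpose_mul, hAsym, hBsym]
  -- trace identity
  have t1 : ((Uᵀ * A) * (A * U)).trace = S.trace := by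
    rw [Matrix.trace_mul_comm]
    have h : (A * U) * (Uᵀ * A) = S := by
      rw [Matrix.mul_assoc, ← Matrix.mul_assoc U Uᵀ A, hUO', Matrix.one_mul, hAA]
    rw [h]
  have t2 : ((Uᵀ * A) * B).trace = R.trace := by
    have h : (Uᵀ * A) * B = R := by
      rw [Matrix.mul_assoc, hCU, ← Matrix.mul_assoc, hUO, Matrix.one_mul]
    rw [h]
  have t3 : (B * (A * U)).trace = R.trace := by
    have hBA : B * A = (A * B)ᵀ := by rw [Matrix.transpose_mul, hAsym, hBsym]
    have h : B * (A * U) = Rᵀ := by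
      rw [← Matrix.mul_assoc, hBA, hCU, Matrix.transpose_mul, Matrix.mul_assoc, hUO,
        Matrix.mul_one]
    rw [h, Matrix.trace_transpose]
  have hexpand : Dᵀ * D = (Uᵀ * A) * (A * U) - (Uᵀ * A) * B - B * (A * U) + B * B := by
    rw [hDT, hDdef]
    noncomm_ring
  have htrG : (S + Shat - (2 : ℝ) • R).trace = (Dᵀ * D).trace := by
    have hL : (S + Shat - (2 : ℝ) • R).trace = S.trace + Shat.trace - 2 * R.trace := by
      rw [Matrix.trace_sub, Matrix.trace_add, Matrix.trace_smul, smul_eq_mul]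
    have hR4 : (B * B).trace = Shat.trace := by rw [hBB]
    have hRt : (Dᵀ * D).trace = S.trace + Shat.trace - 2 * R.trace := by
      rw [hexpand, Matrix.trace_add, Matrix.trace_sub, Matrix.trace_sub, t1, t2, t3, hR4]
      ring
    rw [hL, hRt]
  have hDtr0 : 0 ≤ (Dᵀ * D).trace := trace_tmul_nonneg D
  have hGD : Real.sqrt ((Dᵀ * D).trace) ≤ ε := by rw [← htrG]; exact hG
  -- key scalar inequality : sqrt lamS ≤ sqrt lamH + ε
  have hsqS : Real.sqrt lamS ≤ Real.sqrt lamH + ε := by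
    obtain ⟨i0, hi0⟩ := exists_eq_ciSup_of_finite (f := hS.isHermitian.eigenvalues)
    set v : Fin n → ℝ := ⇑(hS.isHermitian.eigenvectorBasis i0) with hvdef
    have hv1 : v ⬝ᵥ v = 1 := by
      have := onb_dot hS.isHermitian.eigenvectorBasis i0 i0
      simpa using this
    have hSv : v ⬝ᵥ (S *ᵥ v) = lamS := by
      rw [hvdef, eig_dot hS.isHermitian i0, hi0]
    set u : Fin n → ℝ := Uᵀ *ᵥ v with hudef
    have hu1 : u ⬝ᵥ u = 1 := by
      rw [hudef, mulVec_dot_shift, Matrix.transpose_transpose, Matrix.mulVec_mulVec,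
        hUO', Matrix.one_mulVec, hv1]
    have hAv : A *ᵥ v = (B *ᵥ u) + (D *ᵥ u) := by
      have h1 : A *ᵥ v = (A * U) *ᵥ u := by
        rw [hudef, Matrix.mulVec_mulVec, Matrix.mul_assoc, hUO', Matrix.mul_one]
      have h2 : B + D = A * U := by rw [hDdef]; abel
      rw [h1, ← h2, Matrix.add_mulVec]
    have hlamSsqrt : Real.sqrt lamS = Real.sqrt ((A *ᵥ v) ⬝ᵥ (A *ᵥ v)) := by
      rw [hAdot v, hSv]
    have htri : Real.sqrt ((A *ᵥ v) ⬝ᵥ (A *ᵥ v))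
        ≤ Real.sqrt ((B *ᵥ u) ⬝ᵥ (B *ᵥ u)) + Real.sqrt ((D *ᵥ u) ⬝ᵥ (D *ᵥ u)) := by
      rw [hAv]
      exact dot_triangle (B *ᵥ u) (D *ᵥ u)
    have hB1 : Real.sqrt ((B *ᵥ u) ⬝ᵥ (B *ᵥ u)) ≤ Real.sqrt lamH := by
      apply Real.sqrt_le_sqrt
      rw [hBdot u]
      calc u ⬝ᵥ (Shat *ᵥ u) ≤ lamH * (u ⬝ᵥ u) := hquadH u
        _ = lamH := by rw [hu1, mul_one]
    have hD1 : Real.sqrt ((D *ᵥ u) ⬝ᵥ (D *ᵥ u)) ≤ ε := by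
      refine le_trans ?_ hGD
      apply Real.sqrt_le_sqrt
      calc (D *ᵥ u) ⬝ᵥ (D *ᵥ u) ≤ (Dᵀ * D).trace * (u ⬝ᵥ u) := mulVec_dot_le_trace D u
        _ = (Dᵀ * D).trace := by rw [hu1, mul_one]
    calc Real.sqrt lamS = Real.sqrt ((A *ᵥ v) ⬝ᵥ (A *ᵥ v)) := hlamSsqrt
      _ ≤ Real.sqrt ((B *ᵥ u) ⬝ᵥ (B *ᵥ u)) + Real.sqrt ((D *ᵥ u) ⬝ᵥ (D *ᵥ u)) := htri
      _ ≤ Real.sqrt lamH + ε := add_le_add hB1 hD1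
  constructor
  · -- Part 1
    refine ciSup_le fun i => ?_
    set v : Fin n → ℝ := ⇑(hP.eigenvectorBasis i) with hvdef
    have hv1 : v ⬝ᵥ v = 1 := by
      have := onb_dot hP.eigenvectorBasis i i
      simpa using this
    have hPv : hP.eigenvalues i = v ⬝ᵥ ((S + Shat + (2 : ℝ) • R) *ᵥ v) := by
      rw [hvdef, eig_dot hP i]
    have hexp : v ⬝ᵥ ((S + Shat + (2 : ℝ) • R) *ᵥ v)
        = v ⬝ᵥ (S *ᵥ v) + v ⬝ᵥ (Shat *ᵥ v) + 2 * (v ⬝ᵥ (R *ᵥ v)) := by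
      rw [Matrix.add_mulVec, Matrix.add_mulVec, Matrix.smul_mulVec]
      rw [dotProduct_add, dotProduct_add, dotProduct_smul]
      rw [smul_eq_mul]
    have hUv1 : (U *ᵥ v) ⬝ᵥ (U *ᵥ v) = 1 := by
      rw [mulVec_dot_shift, Matrix.mulVec_mulVec, hUO, Matrix.one_mulVec, hv1]
    have hRv : v ⬝ᵥ (R *ᵥ v) ≤ Real.sqrt lamS * Real.sqrt lamH := by
      have h1 : v ⬝ᵥ (R *ᵥ v) = (A *ᵥ (U *ᵥ v)) ⬝ᵥ (B *ᵥ v) := by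
        rw [hRUC, ← Matrix.mulVec_mulVec, ← mulVec_dot_shift U v, ← Matrix.mulVec_mulVec]
        rw [mulVec_dot_shift A (U *ᵥ v), hAsym]
      rw [h1]
      calc (A *ᵥ (U *ᵥ v)) ⬝ᵥ (B *ᵥ v)
          ≤ Real.sqrt ((A *ᵥ (U *ᵥ v)) ⬝ᵥ (A *ᵥ (U *ᵥ v))) *
            Real.sqrt ((B *ᵥ v) ⬝ᵥ (B *ᵥ v)) := dot_cs _ _
        _ ≤ Real.sqrt lamS * Real.sqrt lamH := by
            apply mul_le_mul
            · apply Real.sqrt_le_sqrt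
              rw [hAdot]
              calc (U *ᵥ v) ⬝ᵥ (S *ᵥ (U *ᵥ v)) ≤ lamS * ((U *ᵥ v) ⬝ᵥ (U *ᵥ v)) :=
                    hquadS _
                _ = lamS := by rw [hUv1, mul_one]
            · apply Real.sqrt_le_sqrt
              rw [hBdot]
              calc v ⬝ᵥ (Shat *ᵥ v) ≤ lamH * (v ⬝ᵥ v) := hquadH v
                _ = lamH := by rw [hv1, mul_one]
            · exact Real.sqrt_nonneg _
            · exact Real.sqrt_nonneg _
    have hSb : v ⬝ᵥ (S *ᵥ v) ≤ lamS := by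
      calc v ⬝ᵥ (S *ᵥ v) ≤ lamS * (v ⬝ᵥ v) := hquadS v
        _ = lamS := by rw [hv1, mul_one]
    have hHb : v ⬝ᵥ (Shat *ᵥ v) ≤ lamH := by
      calc v ⬝ᵥ (Shat *ᵥ v) ≤ lamH * (v ⬝ᵥ v) := hquadH v
        _ = lamH := by rw [hv1, mul_one]
    rw [hPv, hexp]
    have hS2 : Real.sqrt lamS ^ 2 = lamS := Real.sq_sqrt hlamS0
    have hH2 : Real.sqrt lamH ^ 2 = lamH := Real.sq_sqrt hlamH0
    nlinarith [hRv, hSb, hHb, hsqS, Real.sqrt_nonneg lamS, Real.sqrt_nonneg lamH, hε]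
  · -- Part 2
    have hd0 : 0 ≤ 2 * Real.sqrt lamH + ε := by positivity
    rcases eq_or_lt_of_le hd0 with hd | hd
    · rw [← hd, div_zero]
      exact Real.sqrt_nonneg _
    · rw [div_le_iff₀ hd]
      have hdecomp : S - Shat = B * Dᵀ + D * (Uᵀ * A) := by
        have h1 : (A * U) * (Uᵀ * A) = S := by
          rw [Matrix.mul_assoc, ← Matrix.mul_assoc U Uᵀ A, hUO', Matrix.one_mul, hAA]
        rw [hDT, hDdef, Matrix.mul_sub, Matrix.sub_mul, h1, ← hBB]
        noncomm_ring
      have hquadB' : ∀ x : Fin n → ℝ, (B *ᵥ x) ⬝ᵥ (B *ᵥ x) ≤ lamH * (x ⬝ᵥ x) := by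
        intro x; rw [hBdot]; exact hquadH x
      have hquadE : ∀ x : Fin n → ℝ,
          ((A * U) *ᵥ x) ⬝ᵥ ((A * U) *ᵥ x) ≤ lamS * (x ⬝ᵥ x) := by
        intro x
        rw [← Matrix.mulVec_mulVec, hAdot]
        calc (U *ᵥ x) ⬝ᵥ (S *ᵥ (U *ᵥ x)) ≤ lamS * ((U *ᵥ x) ⬝ᵥ (U *ᵥ x)) := hquadS _
          _ = lamS * (x ⬝ᵥ x) := by
              rw [mulVec_dot_shift, Matrix.mulVec_mulVec, hUO, Matrix.one_mulVec]
      have hfrob1 : Real.sqrt (((B * Dᵀ)ᵀ * (B * Dᵀ)).trace)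
          ≤ Real.sqrt lamH * Real.sqrt ((Dᵀ * D).trace) := by
        rw [← Real.sqrt_mul hlamH0]
        apply Real.sqrt_le_sqrt
        calc ((B * Dᵀ)ᵀ * (B * Dᵀ)).trace ≤ lamH * ((Dᵀᵀ * Dᵀ)).trace :=
              frob_mul_le B Dᵀ lamH hquadB'
          _ = lamH * (Dᵀ * D).trace := by rw [trace_tmul_transpose]
      have hDE : D * (Uᵀ * A) = ((A * U) * Dᵀ)ᵀ := by
        rw [Matrix.transpose_mul, Matrix.transpose_transpose, Matrix.transpose_mul, hAsym]
      have hfrob2 : Real.sqrt (((D * (Uᵀ * A))ᵀ * (D * (Uᵀ * A))).trace)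
          ≤ Real.sqrt lamS * Real.sqrt ((Dᵀ * D).trace) := by
        rw [← Real.sqrt_mul hlamS0]
        apply Real.sqrt_le_sqrt
        rw [hDE, trace_tmul_transpose]
        calc (((A * U) * Dᵀ)ᵀ * ((A * U) * Dᵀ)).trace ≤ lamS * ((Dᵀᵀ * Dᵀ)).trace :=
              frob_mul_le (A * U) Dᵀ lamS hquadE
          _ = lamS * (Dᵀ * D).trace := by rw [trace_tmul_transpose]
      have htriangle : frobNorm (S - Shat)
          ≤ Real.sqrt (((B * Dᵀ)ᵀ * (B * Dᵀ)).trace)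
            + Real.sqrt (((D * (Uᵀ * A))ᵀ * (D * (Uᵀ * A))).trace) := by
        rw [frobNorm, hdecomp]
        exact frob_triangle (B * Dᵀ) (D * (Uᵀ * A))
      have hsqrtD0 : 0 ≤ Real.sqrt ((Dᵀ * D).trace) := Real.sqrt_nonneg _
      calc frobNorm (S - Shat)
          ≤ Real.sqrt (((B * Dᵀ)ᵀ * (B * Dᵀ)).trace)
            + Real.sqrt (((D * (Uᵀ * A))ᵀ * (D * (Uᵀ * A))).trace) := htriangle
        _ ≤ Real.sqrt lamH * Real.sqrt ((Dᵀ * D).trace)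
            + Real.sqrt lamS * Real.sqrt ((Dᵀ * D).trace) := add_le_add hfrob1 hfrob2
        _ = (Real.sqrt lamH + Real.sqrt lamS) * Real.sqrt ((Dᵀ * D).trace) := by ring
        _ ≤ (Real.sqrt lamH + (Real.sqrt lamH + ε)) * Real.sqrt ((Dᵀ * D).trace) := by
            apply mul_le_mul_of_nonneg_right _ hsqrtD0
            exact add_le_add_right hsqS _
        _ = Real.sqrt ((Dᵀ * D).trace) * (2 * Real.sqrt lamH + ε) := by ring
        _ = Real.sqrt ((S + Shat - (2 : ℝ) • R).trace) * (2 * Real.sqrt lamH + ε) := by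
            rw [htrG]
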